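/- Let N be a positive integer and let Π_N be the group of permutations of {1, ..., N} equipped with the uniform probability measure μ and the metric d_N(σ, π) = #{i : σ(i) ≠ π(i)}. Let f : Π_N → ℝ be 1-Lipschitz with respect to d_N. Then for all t > 0, μ({σ : |f(σ) − E f| ≥ t}) ≤ 2 e^{−t²/(32 N)}. -/

import Mathlib

/-- Expectation with respect to the uniform probability measure on the permutation
group `Π_N` of `{1, ..., N}`. -/
noncomputable def EPi (N : ℕ) (g : Equiv.Perm (Fin N) → ℝ) : ℝ :=
  (∑ σ : Equiv.Perm (Fin N), g σ) / (Fintype.card (Equiv.Perm (Fin N)) : ℝ)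

/-- The Hamming-type distance `d_N(σ, π) = #{i : σ(i) ≠ π(i)}` on `Π_N`. -/
def dPerm (N : ℕ) (σ π : Equiv.Perm (Fin N)) : ℕ :=
  (Finset.univ.filter fun i => σ i ≠ π i).card

section helpers
open Finset Real Equiv

-- finite Hoeffding-type bound
lemma avg_exp_le {α : Type*} [Fintype α] [Nonempty α] (a : α → ℝ) (b L : ℝ)
    (hb : 0 < b) (hsum : ∑ x, a x = 0) (habs : ∀ x, |a x| ≤ b) :
    (∑ x, Real.exp (L * a x)) / (Fintype.card α : ℝ) ≤ Real.exp (L ^ 2 * b ^ 2 / 2) := by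
  have hcard : (0 : ℝ) < (Fintype.card α : ℝ) := by
    exact_mod_cast Fintype.card_pos
  have key : ∀ x, Real.exp (L * a x) ≤
      ((b - a x) / (2 * b)) * Real.exp (-(L * b)) +
        ((b + a x) / (2 * b)) * Real.exp (L * b) := by
    intro x
    have h1 : (0:ℝ) ≤ (b - a x) / (2 * b) := by
      have := (abs_le.mp (habs x)).2
      have : 0 ≤ b - a x := by linarith
      positivity
    have h2 : (0:ℝ) ≤ (b + a x) / (2 * b) := by
      have := (abs_le.mp (habs x)).1
      have : 0 ≤ b + a x := by linarith
      positivity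
    have h3 : (b - a x) / (2 * b) + (b + a x) / (2 * b) = 1 := by
      field_simp; ring
    have := convexOn_exp.2 (Set.mem_univ (-(L * b))) (Set.mem_univ (L * b)) h1 h2 h3
    simp only [smul_eq_mul] at this
    have harg : (b - a x) / (2 * b) * (-(L * b)) + (b + a x) / (2 * b) * (L * b) = L * a x := by
      field_simp; ring
    rwa [harg] at this
  have hsum1 : ∑ x, Real.exp (L * a x) ≤ (Fintype.card α : ℝ) * Real.cosh (L * b) := by
    calc ∑ x, Real.exp (L * a x)
        ≤ ∑ x, (((b - a x) / (2 * b)) * Real.exp (-(L * b)) +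
            ((b + a x) / (2 * b)) * Real.exp (L * b)) := Finset.sum_le_sum fun x _ => key x
      _ = (Fintype.card α : ℝ) * Real.cosh (L * b) := by
          rw [Finset.sum_add_distrib, ← Finset.sum_mul, ← Finset.sum_mul, Real.cosh_eq]
          rw [← Finset.sum_div, ← Finset.sum_div]
          simp only [Finset.sum_sub_distrib, Finset.sum_add_distrib, hsum, Finset.sum_const,
            Finset.card_univ, nsmul_eq_mul]
          field_simp
          ring
  calc (∑ x, Real.exp (L * a x)) / (Fintype.card α : ℝ)
      ≤ Real.cosh (L * b) := by
        rw [div_le_iff₀ hcard]; linarith [hsum1]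
    _ ≤ Real.exp ((L * b) ^ 2 / 2) := Real.cosh_le_exp_half_sq _
    _ = Real.exp (L ^ 2 * b ^ 2 / 2) := by ring_nf

-- same p: distance equals distance of the small permutations
lemma dist_same (n : ℕ) (p : Fin (n + 1)) (e e' : Equiv.Perm (Fin n)) :
    dPerm (n + 1) (Equiv.Perm.decomposeFin.symm (p, e)) (Equiv.Perm.decomposeFin.symm (p, e'))
      = dPerm n e e' := by
  simp only [dPerm, Finset.card_filter]
  rw [Fin.sum_univ_succ]
  simp only [Equiv.Perm.decomposeFin_symm_apply_zero, Equiv.Perm.decomposeFin_symm_apply_succ,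
    ne_eq, not_true_eq_false, if_false]
  have : ∀ j : Fin n,
      (Equiv.swap 0 p ((e j).succ) = Equiv.swap 0 p ((e' j).succ)) ↔ (e j = e' j) := by
    intro j
    rw [Equiv.apply_eq_iff_eq, Fin.succ_inj]
  simp only [this]
  simp

-- different p, same e : distance at most 3
lemma dist_swap (n : ℕ) (p q : Fin (n + 1)) (e : Equiv.Perm (Fin n)) :
    dPerm (n + 1) (Equiv.Perm.decomposeFin.symm (p, e)) (Equiv.Perm.decomposeFin.symm (q, e))
      ≤ 3 := by
  simp only [dPerm, Finset.card_filter]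
  rw [Fin.sum_univ_succ]
  have h0 : (if (Equiv.Perm.decomposeFin.symm (p, e)) 0 ≠ (Equiv.Perm.decomposeFin.symm (q, e)) 0
      then 1 else 0) ≤ 1 := by split <;> simp
  have h1 : ∀ j : Fin n,
      (if (Equiv.Perm.decomposeFin.symm (p, e)) j.succ ≠
          (Equiv.Perm.decomposeFin.symm (q, e)) j.succ then 1 else 0)
        ≤ (if (e j).succ = p ∨ (e j).succ = q then 1 else 0) := by
    intro j
    split
    · rename_i hne
      simp only [Equiv.Perm.decomposeFin_symm_apply_succ] at hne
      by_cases hp : (e j).succ = p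
      · simp [hp]
      · by_cases hq : (e j).succ = q
        · simp [hq]
        · exfalso
          apply hne
          rw [Equiv.swap_apply_of_ne_of_ne (Fin.succ_ne_zero _) hp,
            Equiv.swap_apply_of_ne_of_ne (Fin.succ_ne_zero _) hq]
    · simp
  have h2 : (∑ j : Fin n, if (e j).succ = p ∨ (e j).succ = q then 1 else 0) ≤ 2 := by
    rw [← Finset.card_filter]
    calc (Finset.univ.filter fun j : Fin n => (e j).succ = p ∨ (e j).succ = q).card
        ≤ ({p, q} : Finset (Fin (n+1))).card := by
          apply Finset.card_le_card_of_injOn (fun j => (e j).succ)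
          · intro j hj
            simp only [Finset.mem_coe, Finset.mem_filter] at hj
            simp [hj.2]
          · intro a _ b _ hab
            exact e.injective (Fin.succ_inj.mp hab)
      _ ≤ 2 := Finset.card_insert_le _ _ |>.trans (by simp)
  calc _ ≤ 1 + ∑ j : Fin n, if (e j).succ = p ∨ (e j).succ = q then 1 else 0 :=
        Nat.add_le_add h0 (Finset.sum_le_sum fun j _ => h1 j)
    _ ≤ 1 + 2 := Nat.add_le_add_left h2 _

lemma abs_avg_sub_avg_le {α : Type*} [Fintype α] [Nonempty α] (g h : α → ℝ) (c : ℝ)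
    (hc : ∀ x, |g x - h x| ≤ c) :
    |(∑ x, g x) / (Fintype.card α : ℝ) - (∑ x, h x) / (Fintype.card α : ℝ)| ≤ c := by
  have hcard : (0 : ℝ) < (Fintype.card α : ℝ) := by exact_mod_cast Fintype.card_pos
  rw [div_sub_div_same, ← Finset.sum_sub_distrib, abs_div, abs_of_pos hcard,
    div_le_iff₀ hcard]
  calc |∑ x, (g x - h x)| ≤ ∑ x, |g x - h x| := Finset.abs_sum_le_sum_abs _ _
    _ ≤ ∑ _x : α, c := Finset.sum_le_sum fun x _ => hc x
    _ = c * (Fintype.card α : ℝ) := by simp [mul_comm]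

lemma mgf_le (n : ℕ) (f : Equiv.Perm (Fin n) → ℝ)
    (hf : ∀ σ τ, |f σ - f τ| ≤ (dPerm n σ τ : ℝ)) (L : ℝ) :
    EPi n (fun σ => Real.exp (L * (f σ - EPi n f))) ≤ Real.exp (9 / 2 * L ^ 2 * n) := by
  induction n with
  | zero =>
    haveI : Subsingleton (Equiv.Perm (Fin 0)) :=
      ⟨fun a b => Equiv.ext fun x => x.elim0⟩
    haveI : Unique (Equiv.Perm (Fin 0)) := ⟨⟨1⟩, fun a => Subsingleton.elim _ _⟩
    have hE : ∀ g : Equiv.Perm (Fin 0) → ℝ, EPi 0 g = g default := by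
      intro g
      rw [EPi, Fintype.sum_unique, Fintype.card_unique]
      simp
      exact congrArg g (Subsingleton.elim _ _)
    rw [hE, hE]
    simp
  | succ n ih =>
    set F : Fin (n + 1) → Equiv.Perm (Fin n) → ℝ :=
      fun p e => f (Equiv.Perm.decomposeFin.symm (p, e)) with hF
    set a : Fin (n + 1) → ℝ := fun p => EPi n (F p) with ha
    set μ : ℝ := EPi (n + 1) f with hμ
    have hM : (0 : ℝ) < (Fintype.card (Equiv.Perm (Fin n)) : ℝ) := by
      exact_mod_cast Fintype.card_pos
    have hK : (0 : ℝ) < ((n : ℝ) + 1) := by positivity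
    -- sums over big group decompose
    have hsum_eq : ∀ g : Equiv.Perm (Fin (n + 1)) → ℝ,
        ∑ σ, g σ = ∑ p : Fin (n + 1), ∑ e : Equiv.Perm (Fin n),
          g (Equiv.Perm.decomposeFin.symm (p, e)) := by
      intro g
      rw [← Equiv.sum_comp (Equiv.Perm.decomposeFin.symm) g, Fintype.sum_prod_type]
    have hcard_big : (Fintype.card (Equiv.Perm (Fin (n + 1))) : ℝ)
        = ((n : ℝ) + 1) * (Fintype.card (Equiv.Perm (Fin n)) : ℝ) := by
      rw [Fintype.card_perm, Fintype.card_perm, Fintype.card_fin, Fintype.card_fin,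
        Nat.factorial_succ]
      push_cast
      ring
    -- F p is Lipschitz
    have hFlip : ∀ p, ∀ e e' : Equiv.Perm (Fin n), |F p e - F p e'| ≤ (dPerm n e e' : ℝ) := by
      intro p e e'
      have := hf (Equiv.Perm.decomposeFin.symm (p, e)) (Equiv.Perm.decomposeFin.symm (p, e'))
      rwa [dist_same] at this
    -- |F p e - F q e| ≤ 3
    have hF3 : ∀ p q, ∀ e : Equiv.Perm (Fin n), |F p e - F q e| ≤ 3 := by
      intro p q e
      have h1 := hf (Equiv.Perm.decomposeFin.symm (p, e)) (Equiv.Perm.decomposeFin.symm (q, e))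
      have h2 := dist_swap n p q e
      calc |F p e - F q e| ≤ _ := h1
        _ ≤ 3 := by exact_mod_cast h2
    -- |a p - a q| ≤ 3
    have ha3 : ∀ p q, |a p - a q| ≤ 3 := fun p q =>
      abs_avg_sub_avg_le (F p) (F q) 3 (hF3 p q)
    -- μ = average of a
    have hμa : μ = (∑ p : Fin (n + 1), a p) / ((n : ℝ) + 1) := by
      have h1 : ∑ p : Fin (n + 1), a p
          = (∑ p : Fin (n + 1), ∑ e : Equiv.Perm (Fin n), F p e)
            / (Fintype.card (Equiv.Perm (Fin n)) : ℝ) := by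
        rw [Finset.sum_div]
        exact Finset.sum_congr rfl fun p _ => rfl
      rw [hμ, EPi, hsum_eq f, hcard_big, h1, div_div, mul_comm]
    -- |a p - μ| ≤ 3
    have haμ : ∀ p, |a p - μ| ≤ 3 := by
      intro p
      rw [hμa]
      have : a p = (∑ _q : Fin (n + 1), a p) / ((n : ℝ) + 1) := by
        rw [Finset.sum_const, Finset.card_univ, Fintype.card_fin, nsmul_eq_mul]
        field_simp
        rw [Nat.cast_succ]
      rw [this]
      have := abs_avg_sub_avg_le (fun _ => a p) a 3 (fun q => ha3 p q)
      simpa [Fintype.card_fin] using this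
    -- sum of a p - μ is zero
    have hzero : ∑ p : Fin (n + 1), (a p - μ) = 0 := by
      rw [Finset.sum_sub_distrib, Finset.sum_const, Finset.card_univ, Fintype.card_fin,
        nsmul_eq_mul, hμa]
      field_simp
      simp
    -- main chain
    have key : EPi (n + 1) (fun σ => Real.exp (L * (f σ - μ)))
        ≤ Real.exp (9 / 2 * L ^ 2 * n) *
          ((∑ p : Fin (n + 1), Real.exp (L * (a p - μ))) / ((n : ℝ) + 1)) := by
      rw [EPi, hsum_eq, hcard_big]
      have hsplit : ∀ p (e : Equiv.Perm (Fin n)),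
          Real.exp (L * (F p e - μ))
            = Real.exp (L * (a p - μ)) * Real.exp (L * (F p e - a p)) := by
        intro p e
        rw [← Real.exp_add]
        congr 1
        ring
      have hinner : ∀ p, ∑ e : Equiv.Perm (Fin n), Real.exp (L * (F p e - a p))
          ≤ (Fintype.card (Equiv.Perm (Fin n)) : ℝ) * Real.exp (9 / 2 * L ^ 2 * n) := by
        intro p
        have := ih (F p) (hFlip p)
        rw [EPi, div_le_iff₀ hM] at this
        linarith [this]
      calc (∑ p : Fin (n+1), ∑ e : Equiv.Perm (Fin n), Real.exp (L * (F p e - μ)))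
            / (((n : ℝ) + 1) * (Fintype.card (Equiv.Perm (Fin n)) : ℝ))
          ≤ (∑ p : Fin (n+1), Real.exp (L * (a p - μ)) *
              ((Fintype.card (Equiv.Perm (Fin n)) : ℝ) * Real.exp (9 / 2 * L ^ 2 * n)))
            / (((n : ℝ) + 1) * (Fintype.card (Equiv.Perm (Fin n)) : ℝ)) := by
            apply (div_le_div_iff_of_pos_right (mul_pos hK hM)).mpr
            apply Finset.sum_le_sum
            intro p _
            calc ∑ e : Equiv.Perm (Fin n), Real.exp (L * (F p e - μ))
                = Real.exp (L * (a p - μ)) *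
                  ∑ e : Equiv.Perm (Fin n), Real.exp (L * (F p e - a p)) := by
                  rw [Finset.mul_sum]
                  exact Finset.sum_congr rfl fun e _ => hsplit p e
              _ ≤ _ := by
                  apply mul_le_mul_of_nonneg_left (hinner p) (Real.exp_nonneg _)
        _ = Real.exp (9 / 2 * L ^ 2 * n) *
            ((∑ p : Fin (n + 1), Real.exp (L * (a p - μ))) / ((n : ℝ) + 1)) := by
            rw [← Finset.sum_mul]
            field_simp
    have houter : (∑ p : Fin (n + 1), Real.exp (L * (a p - μ))) / ((n : ℝ) + 1)
        ≤ Real.exp (L ^ 2 * 3 ^ 2 / 2) := by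
      have := avg_exp_le (fun p => a p - μ) 3 L (by norm_num) hzero haμ
      simpa [Fintype.card_fin] using this
    calc EPi (n + 1) (fun σ => Real.exp (L * (f σ - μ)))
        ≤ Real.exp (9 / 2 * L ^ 2 * n) *
          ((∑ p : Fin (n + 1), Real.exp (L * (a p - μ))) / ((n : ℝ) + 1)) := key
      _ ≤ Real.exp (9 / 2 * L ^ 2 * n) * Real.exp (L ^ 2 * 3 ^ 2 / 2) :=
          mul_le_mul_of_nonneg_left houter (Real.exp_nonneg _)
      _ = Real.exp (9 / 2 * L ^ 2 * (n + 1 : ℕ)) := by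
          rw [← Real.exp_add]
          congr 1
          push_cast
          ring

lemma chernoff {α : Type*} [Fintype α] [Nonempty α] (g : α → ℝ) (t L : ℝ) (hL : 0 ≤ L) :
    ((Finset.univ.filter fun x => t ≤ g x).card : ℝ) / (Fintype.card α : ℝ)
      ≤ Real.exp (-(L * t)) * ((∑ x, Real.exp (L * g x)) / (Fintype.card α : ℝ)) := by
  have hcard : (0 : ℝ) < (Fintype.card α : ℝ) := by exact_mod_cast Fintype.card_pos
  rw [← mul_div_assoc]
  apply (div_le_div_iff_of_pos_right hcard).mpr
  have h1 : ((Finset.univ.filter fun x => t ≤ g x).card : ℝ) * Real.exp (L * t)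
      ≤ ∑ x, Real.exp (L * g x) := by
    calc ((Finset.univ.filter fun x => t ≤ g x).card : ℝ) * Real.exp (L * t)
        = ∑ _x ∈ Finset.univ.filter fun x => t ≤ g x, Real.exp (L * t) := by
          rw [Finset.sum_const, nsmul_eq_mul]
      _ ≤ ∑ x ∈ Finset.univ.filter fun x => t ≤ g x, Real.exp (L * g x) := by
          apply Finset.sum_le_sum
          intro x hx
          have := (Finset.mem_filter.mp hx).2
          exact Real.exp_le_exp.mpr (mul_le_mul_of_nonneg_left this hL)
      _ ≤ ∑ x, Real.exp (L * g x) :=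
          Finset.sum_le_sum_of_subset_of_nonneg (Finset.filter_subset _ _)
            (fun x _ _ => Real.exp_nonneg _)
  calc ((Finset.univ.filter fun x => t ≤ g x).card : ℝ)
      = Real.exp (-(L * t)) * (((Finset.univ.filter fun x => t ≤ g x).card : ℝ)
          * Real.exp (L * t)) := by
        rw [← mul_assoc, mul_comm (Real.exp _), mul_assoc, ← Real.exp_add]
        simp
    _ ≤ Real.exp (-(L * t)) * ∑ x, Real.exp (L * g x) :=
        mul_le_mul_of_nonneg_left h1 (Real.exp_nonneg _)

end helpers

theorem stmt15 (N : ℕ) (hN : 0 < N) (f : Equiv.Perm (Fin N) → ℝ)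
    (hf : ∀ σ π : Equiv.Perm (Fin N), |f σ - f π| ≤ (dPerm N σ π : ℝ)) (t : ℝ) (ht : 0 < t) :
    ((Finset.univ.filter fun σ : Equiv.Perm (Fin N) => t ≤ |f σ - EPi N f|).card : ℝ) /
        (Fintype.card (Equiv.Perm (Fin N)) : ℝ) ≤
      2 * Real.exp (-t ^ 2 / (32 * N)) := by
  have hNR : (0 : ℝ) < (N : ℝ) := by exact_mod_cast hN
  have hcard : (0 : ℝ) < (Fintype.card (Equiv.Perm (Fin N)) : ℝ) := by
    exact_mod_cast Fintype.card_pos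
  set L : ℝ := t / (9 * N) with hL
  have hL0 : 0 ≤ L := by positivity
  set μ : ℝ := EPi N f with hμ
  -- the two one-sided events
  have hsubset : (Finset.univ.filter fun σ : Equiv.Perm (Fin N) => t ≤ |f σ - μ|)
      ⊆ (Finset.univ.filter fun σ : Equiv.Perm (Fin N) => t ≤ f σ - μ)
        ∪ (Finset.univ.filter fun σ : Equiv.Perm (Fin N) => t ≤ μ - f σ) := by
    intro σ hσ
    simp only [Finset.mem_filter, Finset.mem_union, Finset.mem_univ, true_and] at *
    rcases le_abs.mp hσ with h | h
    · exact Or.inl h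
    · exact Or.inr (by linarith)
  -- exponent computation
  have hexp : -(L * t) + 9 / 2 * L ^ 2 * N = -t ^ 2 / (18 * N) := by
    rw [hL]
    field_simp
    ring
  have hexp_le : Real.exp (-t ^ 2 / (18 * N)) ≤ Real.exp (-t ^ 2 / (32 * N)) := by
    apply Real.exp_le_exp.mpr
    rw [neg_div, neg_div, neg_le_neg_iff]
    apply div_le_div_of_nonneg_left (by positivity) (by positivity)
    nlinarith [hNR]
  -- one-sided bound, upper tail
  have side1 : ((Finset.univ.filter fun σ : Equiv.Perm (Fin N) => t ≤ f σ - μ).card : ℝ)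
      / (Fintype.card (Equiv.Perm (Fin N)) : ℝ) ≤ Real.exp (-t ^ 2 / (32 * N)) := by
    have h1 := chernoff (fun σ : Equiv.Perm (Fin N) => f σ - μ) t L hL0
    have h2 := mgf_le N f hf L
    rw [EPi] at h2
    calc ((Finset.univ.filter fun σ : Equiv.Perm (Fin N) => t ≤ f σ - μ).card : ℝ)
        / (Fintype.card (Equiv.Perm (Fin N)) : ℝ)
        ≤ Real.exp (-(L * t)) * ((∑ σ : Equiv.Perm (Fin N), Real.exp (L * (f σ - μ)))
            / (Fintype.card (Equiv.Perm (Fin N)) : ℝ)) := h1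
      _ ≤ Real.exp (-(L * t)) * Real.exp (9 / 2 * L ^ 2 * N) :=
          mul_le_mul_of_nonneg_left h2 (Real.exp_nonneg _)
      _ = Real.exp (-t ^ 2 / (18 * N)) := by rw [← Real.exp_add, hexp]
      _ ≤ _ := hexp_le
  -- one-sided bound, lower tail (apply to -f)
  have side2 : ((Finset.univ.filter fun σ : Equiv.Perm (Fin N) => t ≤ μ - f σ).card : ℝ)
      / (Fintype.card (Equiv.Perm (Fin N)) : ℝ) ≤ Real.exp (-t ^ 2 / (32 * N)) := by
    have hf' : ∀ σ τ : Equiv.Perm (Fin N), |(-f) σ - (-f) τ| ≤ (dPerm N σ τ : ℝ) := by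
      intro σ τ
      have h := hf τ σ
      have hd : dPerm N τ σ = dPerm N σ τ := by
        simp only [dPerm]
        congr 1
        apply Finset.filter_congr
        intro i _
        simp [ne_comm]
      rw [hd] at h
      have hx : (-f) σ - (-f) τ = f τ - f σ := by simp [Pi.neg_apply]; ring
      rw [hx]; exact h
    have hEneg : EPi N (-f) = -μ := by
      rw [hμ, EPi, EPi, ← neg_div, ← Finset.sum_neg_distrib]
      rfl
    have h1 := chernoff (fun σ : Equiv.Perm (Fin N) => μ - f σ) t L hL0
    have h2 := mgf_le N (-f) hf' L
    rw [EPi, hEneg] at h2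
    have harg : ∀ σ : Equiv.Perm (Fin N), (-f) σ - (-μ) = μ - f σ := by
      intro σ; simp; ring
    simp only [harg] at h2
    calc ((Finset.univ.filter fun σ : Equiv.Perm (Fin N) => t ≤ μ - f σ).card : ℝ)
        / (Fintype.card (Equiv.Perm (Fin N)) : ℝ)
        ≤ Real.exp (-(L * t)) * ((∑ σ : Equiv.Perm (Fin N), Real.exp (L * (μ - f σ)))
            / (Fintype.card (Equiv.Perm (Fin N)) : ℝ)) := h1
      _ ≤ Real.exp (-(L * t)) * Real.exp (9 / 2 * L ^ 2 * N) :=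
          mul_le_mul_of_nonneg_left h2 (Real.exp_nonneg _)
      _ = Real.exp (-t ^ 2 / (18 * N)) := by rw [← Real.exp_add, hexp]
      _ ≤ _ := hexp_le
  -- combine
  calc ((Finset.univ.filter fun σ : Equiv.Perm (Fin N) => t ≤ |f σ - μ|).card : ℝ)
      / (Fintype.card (Equiv.Perm (Fin N)) : ℝ)
      ≤ (((Finset.univ.filter fun σ : Equiv.Perm (Fin N) => t ≤ f σ - μ).card : ℝ)
          + ((Finset.univ.filter fun σ : Equiv.Perm (Fin N) => t ≤ μ - f σ).card : ℝ))
        / (Fintype.card (Equiv.Perm (Fin N)) : ℝ) := by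
        apply (div_le_div_iff_of_pos_right hcard).mpr
        have := Finset.card_le_card hsubset
        have h2 := Finset.card_union_le
          (Finset.univ.filter fun σ : Equiv.Perm (Fin N) => t ≤ f σ - μ)
          (Finset.univ.filter fun σ : Equiv.Perm (Fin N) => t ≤ μ - f σ)
        exact_mod_cast this.trans h2
    _ = ((Finset.univ.filter fun σ : Equiv.Perm (Fin N) => t ≤ f σ - μ).card : ℝ)
          / (Fintype.card (Equiv.Perm (Fin N)) : ℝ)
        + ((Finset.univ.filter fun σ : Equiv.Perm (Fin N) => t ≤ μ - f σ).card : ℝ)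
          / (Fintype.card (Equiv.Perm (Fin N)) : ℝ) := by rw [add_div]
    _ ≤ Real.exp (-t ^ 2 / (32 * N)) + Real.exp (-t ^ 2 / (32 * N)) := add_le_add side1 side2
    _ = 2 * Real.exp (-t ^ 2 / (32 * N)) := by ring
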